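/- The price of no control satisfies Γ ≤ 2n/(2n-1) for n ≥ 1 lanes: the ratio of the capacity n·c^UB(ᾱ) (optimal ordering) to the optimal Bernoulli lane-assignment capacity C(α*) is at most 2n(L+h) / ((2n-1)(L+h) + √((L+h)(L+h̄))), which is at most 2n/(2n-1). -/

import Mathlib

/-- Sum of a function over a three-block lane assignment. -/
lemma sum_blocks (n k : ℕ) (hk : k < n) (α : ℝ) (F : ℝ → ℝ) :
    (∑ i : Fin n, F (if (i : ℕ) < k then (1:ℝ) else if (i : ℕ) = k then α else 0))
      = k * F 1 + F α + ((n : ℝ) - k - 1) * F 0 := by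
  have hk1 : k + 1 ≤ n := hk
  rw [Fin.sum_univ_eq_sum_range (fun j => F (if j < k then (1:ℝ) else if j = k then α else 0)) n]
  rw [← Finset.sum_range_add_sum_Ico _ hk1, Finset.sum_range_succ]
  have e1 : (∑ i ∈ Finset.range k,
      F (if i < k then (1:ℝ) else if i = k then α else 0)) = k * F 1 := by
    calc (∑ i ∈ Finset.range k, F (if i < k then (1:ℝ) else if i = k then α else 0))
        = ∑ _i ∈ Finset.range k, F 1 :=
          Finset.sum_congr rfl fun i hi => by rw [if_pos (Finset.mem_range.mp hi)]
      _ = k * F 1 := by rw [Finset.sum_const, Finset.card_range, nsmul_eq_mul]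
  have e2 : F (if k < k then (1:ℝ) else if k = k then α else 0) = F α := by
    rw [if_neg (lt_irrefl k), if_pos rfl]
  have e3 : (∑ i ∈ Finset.Ico (k+1) n,
      F (if i < k then (1:ℝ) else if i = k then α else 0)) = ((n - (k+1) : ℕ)) * F 0 := by
    calc (∑ i ∈ Finset.Ico (k+1) n, F (if i < k then (1:ℝ) else if i = k then α else 0))
        = ∑ _i ∈ Finset.Ico (k+1) n, F 0 :=
          Finset.sum_congr rfl fun i hi => by
            have h1 := (Finset.mem_Ico.mp hi).1
            rw [if_neg (by omega), if_neg (by omega)]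
      _ = ((n - (k+1) : ℕ)) * F 0 := by rw [Finset.sum_const, Nat.card_Ico, nsmul_eq_mul]
  rw [e1, e2, e3, Nat.cast_sub hk1]
  push_cast
  ring


set_option maxHeartbeats 1000000 in
/-- Existence of the mixed-lane value via the intermediate value theorem. -/
lemma exists_mixed (L h hb abar d kR nR : ℝ)
    (hd : 0 < d) (hL : 0 ≤ L) (hhb : 0 ≤ hb) (hbh : hb < h) (hLhb : 0 < L + hb)
    (ht0 : 0 ≤ abar) (ht1 : abar ≤ 1)
    (hW1 : kR * ((1 - abar) * (L + h)) ≤ (nR - kR) * (abar * (L + hb)))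
    (hW2 : (nR - 1 - kR) * (abar * (L + hb)) ≤ (kR + 1) * ((1 - abar) * (L + h))) :
    ∃ α ∈ Set.Icc (0:ℝ) 1,
      (α - abar) * (d / (L + α ^ 2 * hb + (1 - α ^ 2) * h)) +
        (kR * (1 - abar) * (d / (L + hb)) - (nR - 1 - kR) * abar * (d / (L + h))) = 0 := by
  have hA : 0 < L + h := by linarith
  have hcont : ContinuousOn (fun x : ℝ =>
      (x - abar) * (d / (L + x ^ 2 * hb + (1 - x ^ 2) * h)) +
        (kR * (1 - abar) * (d / (L + hb)) - (nR - 1 - kR) * abar * (d / (L + h))))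
      (Set.Icc (0:ℝ) 1) := by
    have c1 : Continuous fun x : ℝ => L + x ^ 2 * hb + (1 - x ^ 2) * h :=
      (continuous_const.add ((continuous_pow 2).mul continuous_const)).add
        ((continuous_const.sub (continuous_pow 2)).mul continuous_const)
    apply ContinuousOn.add _ continuousOn_const
    apply ContinuousOn.mul ((continuous_id.sub continuous_const).continuousOn)
    apply ContinuousOn.div continuousOn_const c1.continuousOn
    intro x hx
    have hx2 : x ^ 2 ≤ 1 := by nlinarith [hx.1, hx.2]
    have hpos : 0 < L + x ^ 2 * hb + (1 - x ^ 2) * h := by nlinarith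
    exact ne_of_gt hpos
  have hg0le : ((0:ℝ) - abar) * (d / (L + (0:ℝ) ^ 2 * hb + (1 - (0:ℝ) ^ 2) * h)) +
      (kR * (1 - abar) * (d / (L + hb)) - (nR - 1 - kR) * abar * (d / (L + h))) ≤ 0 := by
    have e0 : ((0:ℝ) - abar) * (d / (L + (0:ℝ) ^ 2 * hb + (1 - (0:ℝ) ^ 2) * h)) +
        (kR * (1 - abar) * (d / (L + hb)) - (nR - 1 - kR) * abar * (d / (L + h)))
        = d * (kR * ((1 - abar) * (L + h)) - (nR - kR) * (abar * (L + hb)))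
            / ((L + h) * (L + hb)) := by
      field_simp [hA.ne', hLhb.ne']
      ring
    rw [e0]
    apply div_nonpos_of_nonpos_of_nonneg _ (mul_pos hA hLhb).le
    nlinarith [hW1]
  have hg1ge : (0:ℝ) ≤ ((1:ℝ) - abar) * (d / (L + (1:ℝ) ^ 2 * hb + (1 - (1:ℝ) ^ 2) * h)) +
      (kR * (1 - abar) * (d / (L + hb)) - (nR - 1 - kR) * abar * (d / (L + h))) := by
    have e1 : ((1:ℝ) - abar) * (d / (L + (1:ℝ) ^ 2 * hb + (1 - (1:ℝ) ^ 2) * h)) +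
        (kR * (1 - abar) * (d / (L + hb)) - (nR - 1 - kR) * abar * (d / (L + h)))
        = d * ((kR + 1) * ((1 - abar) * (L + h)) - (nR - 1 - kR) * (abar * (L + hb)))
            / ((L + h) * (L + hb)) := by
      field_simp [hA.ne', hLhb.ne']
      ring
    rw [e1]
    apply div_nonneg _ (mul_pos hA hLhb).le
    nlinarith [hW2]
  obtain ⟨α, hαI, hgα⟩ := intermediate_value_Icc (by norm_num : (0:ℝ) ≤ 1) hcont
    (Set.mem_Icc.mpr ⟨hg0le, hg1ge⟩)
  exact ⟨α, hαI, hgα⟩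

set_option maxHeartbeats 1000000 in
/-- The key capacity lower bound for the three-block feasible assignment. -/
lemma key_ineq (L h hb abar α d s kR nR : ℝ)
    (hd : 0 < d) (hL : 0 ≤ L) (hhb : 0 ≤ hb) (hbh : hb < h) (hLhb : 0 < L + hb)
    (ht0 : 0 ≤ abar) (ht1 : abar ≤ 1) (hα0 : 0 ≤ α) (hα1 : α ≤ 1)
    (hs0 : 0 ≤ s) (hs2 : s ^ 2 = (L + h) * (L + hb))
    (hgα : (α - abar) * (d / (L + α ^ 2 * hb + (1 - α ^ 2) * h)) +
      (kR * (1 - abar) * (d / (L + hb)) - (nR - 1 - kR) * abar * (d / (L + h))) = 0) :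
    d * ((2 * nR - 1) * (L + h) + s) / (2 * (L + h) * (L + h - abar * (h - hb)))
      ≤ kR * (d / (L + hb)) + d / (L + α ^ 2 * hb + (1 - α ^ 2) * h) +
        (nR - 1 - kR) * (d / (L + h)) := by
  have hA : 0 < L + h := by linarith
  have hΔ : 0 < h - hb := by linarith
  have hQ : 0 < L + h - abar * (h - hb) := by nlinarith
  have hα2 : α ^ 2 ≤ 1 := by nlinarith
  have hP : 0 < L + α ^ 2 * hb + (1 - α ^ 2) * h := by nlinarith
  have hCpoly : (α - abar) * ((L + h) * (L + hb)) +
      (kR * (1 - abar) * (L + h) - (nR - 1 - kR) * abar * (L + hb)) *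
        (L + α ^ 2 * hb + (1 - α ^ 2) * h) = 0 := by
    have hfrac : (α - abar) * (d / (L + α ^ 2 * hb + (1 - α ^ 2) * h)) +
        (kR * (1 - abar) * (d / (L + hb)) - (nR - 1 - kR) * abar * (d / (L + h)))
        = ((α - abar) * ((L + h) * (L + hb)) +
            (kR * (1 - abar) * (L + h) - (nR - 1 - kR) * abar * (L + hb)) *
              (L + α ^ 2 * hb + (1 - α ^ 2) * h)) *
          (d / ((L + h) * (L + hb) * (L + α ^ 2 * hb + (1 - α ^ 2) * h))) := by
      field_simp
    have h0 : ((α - abar) * ((L + h) * (L + hb)) +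
        (kR * (1 - abar) * (L + h) - (nR - 1 - kR) * abar * (L + hb)) *
          (L + α ^ 2 * hb + (1 - α ^ 2) * h)) *
        (d / ((L + h) * (L + hb) * (L + α ^ 2 * hb + (1 - α ^ 2) * h))) = 0 := by
      rw [← hfrac]; exact hgα
    have hne : d / ((L + h) * (L + hb) * (L + α ^ 2 * hb + (1 - α ^ 2) * h)) ≠ 0 :=
      ne_of_gt (div_pos hd (mul_pos (mul_pos hA hLhb) hP))
    exact (mul_eq_zero.mp h0).resolve_right hne
  have hid : (h - hb) *
      (2 * (L + h) * (L + α ^ 2 * hb + (1 - α ^ 2) * h) * (L + h - abar * (h - hb)) *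
          (L + h - abar * (h - hb)) * kR
        + 2 * (L + h) * (L + hb) * (L + h - abar * (h - hb)) * (L + h - abar * (h - hb))
        + 2 * (L + hb) * (L + α ^ 2 * hb + (1 - α ^ 2) * h) * (L + h - abar * (h - hb)) *
          (L + h - abar * (h - hb)) * (nR - 1 - kR)
        - ((2 * nR - 1) * (L + h) + s) * (L + hb) * (L + α ^ 2 * hb + (1 - α ^ 2) * h) *
          (L + h - abar * (h - hb)))
      = (L + hb) * ((L + h) + s) * (L + h - abar * (h - hb)) *
          ((h - hb) * α - (L + h) + s) ^ 2 := by
    linear_combination (2 * (h - hb) ^ 2 * (L + h - abar * (h - hb))) * hCpoly +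
      ((L + hb) * (L + h - abar * (h - hb)) * ((L + h) - s - 2 * α * (h - hb))) * hs2
  have h2 : 0 ≤ (L + hb) * ((L + h) + s) * (L + h - abar * (h - hb)) *
      ((h - hb) * α - (L + h) + s) ^ 2 :=
    mul_nonneg (mul_nonneg (mul_nonneg hLhb.le (by linarith)) hQ.le) (sq_nonneg _)
  have hBRnn : 0 ≤
      2 * (L + h) * (L + α ^ 2 * hb + (1 - α ^ 2) * h) * (L + h - abar * (h - hb)) *
          (L + h - abar * (h - hb)) * kR
        + 2 * (L + h) * (L + hb) * (L + h - abar * (h - hb)) * (L + h - abar * (h - hb))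
        + 2 * (L + hb) * (L + α ^ 2 * hb + (1 - α ^ 2) * h) * (L + h - abar * (h - hb)) *
          (L + h - abar * (h - hb)) * (nR - 1 - kR)
        - ((2 * nR - 1) * (L + h) + s) * (L + hb) * (L + α ^ 2 * hb + (1 - α ^ 2) * h) *
          (L + h - abar * (h - hb)) :=
    (mul_nonneg_iff_of_pos_left hΔ).mp (hid ▸ h2)
  rw [← sub_nonneg]
  have hSV : kR * (d / (L + hb)) + d / (L + α ^ 2 * hb + (1 - α ^ 2) * h) +
      (nR - 1 - kR) * (d / (L + h)) -
      d * ((2 * nR - 1) * (L + h) + s) / (2 * (L + h) * (L + h - abar * (h - hb)))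
      = d * (2 * (L + h) * (L + α ^ 2 * hb + (1 - α ^ 2) * h) * (L + h - abar * (h - hb)) *
          (L + h - abar * (h - hb)) * kR
        + 2 * (L + h) * (L + hb) * (L + h - abar * (h - hb)) * (L + h - abar * (h - hb))
        + 2 * (L + hb) * (L + α ^ 2 * hb + (1 - α ^ 2) * h) * (L + h - abar * (h - hb)) *
          (L + h - abar * (h - hb)) * (nR - 1 - kR)
        - ((2 * nR - 1) * (L + h) + s) * (L + hb) * (L + α ^ 2 * hb + (1 - α ^ 2) * h) *
          (L + h - abar * (h - hb))) /
        (2 * (L + h) * (L + hb) * (L + α ^ 2 * hb + (1 - α ^ 2) * h) *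
          (L + h - abar * (h - hb)) ^ 2) := by
    have hPne := hP.ne'
    generalize L + α ^ 2 * hb + (1 - α ^ 2) * h = P at hPne ⊢
    field_simp
  rw [hSV]
  apply div_nonneg (mul_nonneg hd.le hBRnn)
  exact (mul_pos (mul_pos (mul_pos (mul_pos two_pos hA) hLhb) hP) (pow_pos hQ 2)).le

set_option maxHeartbeats 3200000 in
/-- Price of no control bound: the ratio of the optimally ordered capacity
`n·c^UB(ᾱ)` to the optimal Bernoulli lane-assignment capacity `C(α*)` is at
most `2n(L+h)/((2n-1)(L+h) + √((L+h)(L+h̄)))`, which is at most `2n/(2n-1)`. -/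
theorem price_of_no_control_bound
    (n : ℕ) (hn : 1 ≤ n) (abar d L h hb : ℝ)
    (habar : abar ∈ Set.Icc (0 : ℝ) 1)
    (hd : 0 < d) (hL : 0 ≤ L) (hhb : 0 ≤ hb) (hbh : hb < h) (hLhb : 0 < L + hb)
    (c cUB : ℝ → ℝ)
    (hc : ∀ α, c α = d / (L + α ^ 2 * hb + (1 - α ^ 2) * h))
    (hcUB : ∀ α, cUB α = d / (L + α * hb + (1 - α) * h))
    (Cstar : ℝ)
    (hCstar : IsGreatest {S : ℝ | ∃ αs : Fin n → ℝ,
      (∀ i, αs i ∈ Set.Icc (0 : ℝ) 1) ∧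
      (∑ i, (αs i - abar) * c (αs i) = 0) ∧ S = ∑ i, c (αs i)} Cstar) :
    (n : ℝ) * cUB abar / Cstar ≤
      2 * n * (L + h) /
        ((2 * n - 1) * (L + h) + Real.sqrt ((L + h) * (L + hb))) ∧
    2 * n * (L + h) /
        ((2 * n - 1) * (L + h) + Real.sqrt ((L + h) * (L + hb))) ≤
      2 * n / (2 * n - 1) := by
  obtain ⟨ht0, ht1⟩ := habar
  have hA : 0 < L + h := by linarith
  have hΔ : 0 < h - hb := by linarith
  set s := Real.sqrt ((L + h) * (L + hb)) with hsdef
  have hs2 : s ^ 2 = (L + h) * (L + hb) := Real.sq_sqrt (mul_pos hA hLhb).le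
  have hs0 : 0 ≤ s := Real.sqrt_nonneg _
  have hn1 : (1:ℝ) ≤ (n:ℝ) := by exact_mod_cast hn
  have h2n1 : (0:ℝ) < 2 * (n:ℝ) - 1 := by linarith
  have hden : 0 < (2 * (n:ℝ) - 1) * (L + h) + s := by nlinarith
  have part2 : 2 * (n:ℝ) * (L + h) / ((2 * (n:ℝ) - 1) * (L + h) + s) ≤ 2 * n / (2 * n - 1) := by
    rw [div_le_div_iff₀ hden h2n1]
    nlinarith [mul_nonneg (by linarith : (0:ℝ) ≤ 2 * (n:ℝ)) hs0]
  have hQ : 0 < L + h - abar * (h - hb) := by nlinarith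
  -- choice of the number of lanes at 1
  obtain ⟨k, hkn, hkR, hfloor, hup⟩ : ∃ k : ℕ, k < n ∧ ((k:ℝ) ≤ (n:ℝ) - 1) ∧
      (k:ℝ) * (L + h - abar * (h - hb)) ≤ (n:ℝ) * abar * (L + hb) ∧
      (n:ℝ) * abar * (L + hb) ≤ ((k:ℝ) + 1) * (L + h - abar * (h - hb)) := by
    set κ : ℝ := (n:ℝ) * abar * (L + hb) / (L + h - abar * (h - hb)) with hκdef
    have hκ0 : 0 ≤ κ := by
      apply div_nonneg _ hQ.le
      have h1 : 0 ≤ (n:ℝ) * abar := mul_nonneg (Nat.cast_nonneg n) ht0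
      nlinarith
    refine ⟨min (n - 1) ⌊κ⌋₊, ?_, ?_, ?_, ?_⟩
    · exact lt_of_le_of_lt (min_le_left _ _) (by omega)
    · have h1 : ((min (n - 1) ⌊κ⌋₊ : ℕ):ℝ) ≤ ((n - 1 : ℕ) : ℝ) :=
        Nat.cast_le.mpr (min_le_left _ _)
      rwa [Nat.cast_sub hn, Nat.cast_one] at h1
    · have h1 : ((min (n - 1) ⌊κ⌋₊ : ℕ):ℝ) ≤ κ :=
        le_trans (Nat.cast_le.mpr (min_le_right _ _)) (Nat.floor_le hκ0)
      rw [hκdef] at h1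
      exact (le_div_iff₀ hQ).mp h1
    · have h2 : κ ≤ ((min (n - 1) ⌊κ⌋₊ : ℕ):ℝ) + 1 := by
        rcases le_or_gt (n - 1) ⌊κ⌋₊ with hle | hlt
        · have hkeq : min (n - 1) ⌊κ⌋₊ = n - 1 := min_eq_left hle
          have hκn : κ ≤ (n:ℝ) := by
            rw [hκdef, div_le_iff₀ hQ]
            nlinarith [mul_nonneg (mul_nonneg (Nat.cast_nonneg n : (0:ℝ) ≤ n)
              (by linarith : (0:ℝ) ≤ 1 - abar)) hA.le]
          have he : ((min (n - 1) ⌊κ⌋₊ : ℕ):ℝ) = (n:ℝ) - 1 := by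
            rw [hkeq, Nat.cast_sub hn, Nat.cast_one]
          rw [he]; linarith
        · have hkeq : min (n - 1) ⌊κ⌋₊ = ⌊κ⌋₊ := min_eq_right hlt.le
          rw [hkeq]
          exact (Nat.lt_floor_add_one κ).le
      rw [hκdef] at h2
      exact (div_le_iff₀ hQ).mp h2
  -- window inequalities
  have hW1 : (k:ℝ) * ((1 - abar) * (L + h)) ≤ ((n:ℝ) - (k:ℝ)) * (abar * (L + hb)) := by
    nlinarith [hfloor]
  have hW2 : ((n:ℝ) - 1 - (k:ℝ)) * (abar * (L + hb)) ≤ ((k:ℝ) + 1) * ((1 - abar) * (L + h)) := by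
    nlinarith [hup]
  -- the mixed-lane value
  obtain ⟨α, hαI, hgα⟩ := exists_mixed L h hb abar d (k:ℝ) (n:ℝ)
    hd hL hhb hbh hLhb ht0 ht1 hW1 hW2
  obtain ⟨hα0, hα1⟩ := hαI
  -- the feasible three-block assignment
  have hmem : ((k:ℝ) * (d / (L + hb)) + d / (L + α ^ 2 * hb + (1 - α ^ 2) * h) +
      ((n:ℝ) - 1 - (k:ℝ)) * (d / (L + h))) ∈ {S : ℝ | ∃ αs : Fin n → ℝ,
      (∀ i, αs i ∈ Set.Icc (0 : ℝ) 1) ∧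
      (∑ i, (αs i - abar) * c (αs i) = 0) ∧ S = ∑ i, c (αs i)} := by
    refine ⟨fun i => if (i : ℕ) < k then (1:ℝ) else if (i : ℕ) = k then α else 0, ?_, ?_, ?_⟩
    · intro i
      dsimp only
      split_ifs
      · exact ⟨by norm_num, le_refl 1⟩
      · exact ⟨hα0, hα1⟩
      · exact ⟨le_refl 0, by norm_num⟩
    · have hsum := sum_blocks n k hkn α (fun x => (x - abar) * c x)
      dsimp only at hsum ⊢
      rw [hsum, hc 1, hc 0, hc α]
      linear_combination hgα
    · have hsum := sum_blocks n k hkn α c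
      rw [hsum, hc 1, hc 0, hc α]
      ring
  have hSC : (k:ℝ) * (d / (L + hb)) + d / (L + α ^ 2 * hb + (1 - α ^ 2) * h) +
      ((n:ℝ) - 1 - (k:ℝ)) * (d / (L + h)) ≤ Cstar := hCstar.2 hmem
  have hVS := key_ineq L h hb abar α d s (k:ℝ) (n:ℝ)
    hd hL hhb hbh hLhb ht0 ht1 hα0 hα1 hs0 hs2 hgα
  have hV : 0 < d * ((2 * (n:ℝ) - 1) * (L + h) + s) /
      (2 * (L + h) * (L + h - abar * (h - hb))) :=
    div_pos (mul_pos hd hden) (mul_pos (mul_pos two_pos hA) hQ)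
  have hVC : d * ((2 * (n:ℝ) - 1) * (L + h) + s) /
      (2 * (L + h) * (L + h - abar * (h - hb))) ≤ Cstar := le_trans hVS hSC
  constructor
  · have hcUBa : cUB abar = d / (L + h - abar * (h - hb)) := by
      rw [hcUB abar]
      congr 1
      ring
    rw [hcUBa]
    have hstep : (n:ℝ) * (d / (L + h - abar * (h - hb))) / Cstar
        ≤ (n:ℝ) * (d / (L + h - abar * (h - hb))) /
          (d * ((2 * (n:ℝ) - 1) * (L + h) + s) /
            (2 * (L + h) * (L + h - abar * (h - hb)))) := by
      apply div_le_div_of_nonneg_left _ hV hVC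
      exact mul_nonneg (Nat.cast_nonneg n) (div_nonneg hd.le hQ.le)
    refine le_trans hstep (le_of_eq ?_)
    rw [div_eq_div_iff hV.ne' hden.ne']
    field_simp
  · exact part2
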